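/- For all nonnegative integers b and d, if M = [[1,b,1],[d,0,d],[1,b,1]], then nim(TER(M)) = 0. -/
import Mathlib


/-- The minimum excludant of a set of naturals. -/
noncomputable def mex (S : Set ℕ) : ℕ := sInf {n : ℕ | n ∉ S}

/-- A gamegraph: positions with an option function whose option relation is
well-founded (all plays are acyclic), together with a starting position. -/
structure GameGraph where
  Pos : Type
  opt : Pos → Set Pos
  wf : WellFounded fun q p => q ∈ opt p
  start : Pos

/-- The nim-value of a position: the mex of the nim-values of its options;
terminal positions get nim-value `0`. -/
noncomputable def GameGraph.nim (G : GameGraph) : G.Pos → ℕ :=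
  G.wf.fix fun p ih => mex {n : ℕ | ∃ q, ∃ h : q ∈ G.opt p, ih q h = n}

/-- The nim-value of a gamegraph is the nim-value of its starting position. -/
noncomputable def GameGraph.nimValue (G : GameGraph) : ℕ := G.nim G.start

/-- 3×3 matrices of nonnegative integers. -/
abbrev Mat3 := Fin 3 → Fin 3 → ℕ

/-- All four edge sums (top row, bottom row, left column, right column) are positive. -/
def edgeOK (M : Mat3) : Prop :=
  0 < M 0 0 + M 0 1 + M 0 2 ∧ 0 < M 2 0 + M 2 1 + M 2 2 ∧
  0 < M 0 0 + M 1 0 + M 2 0 ∧ 0 < M 0 2 + M 1 2 + M 2 2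

/-- Decrease entry `(i, j)` by one. -/
def decEntry (M : Mat3) (i j : Fin 3) : Mat3 :=
  fun a b => if a = i ∧ b = j then M a b - 1 else M a b

/-- Matrices obtained from `M` by decreasing one positive entry by `1`. -/
def matMoves (M : Mat3) : Set Mat3 :=
  {N | ∃ i j, 0 < M i j ∧ N = decEntry M i j}

/-- Options in the avoidance matrix game `DNT(M)`: decrease a positive entry by one
so that all four edge sums remain positive. -/
def DNTmatOpt (M : Mat3) : Set Mat3 := {N | N ∈ matMoves M ∧ edgeOK N}

/-- Options in the achievement matrix game `TER(M)`: a matrix with a zero edge sum is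
terminal; otherwise any positive entry may be decreased by one. -/
def TERmatOpt (M : Mat3) : Set Mat3 := {N | edgeOK M ∧ N ∈ matMoves M}

def mtot (M : Mat3) : ℕ := ∑ p : Fin 3 × Fin 3, M p.1 p.2

theorem mtot_lt {M N : Mat3} (h : N ∈ matMoves M) : mtot N < mtot M := by
  obtain ⟨i, j, hpos, rfl⟩ := h
  unfold mtot
  apply Finset.sum_lt_sum
  · intro p _
    simp only [decEntry]
    split <;> omega
  · refine ⟨(i, j), Finset.mem_univ _, ?_⟩
    have hlt : M i j - 1 < M i j := by omega
    simpa [decEntry] using hlt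

theorem matWF {opt : Mat3 → Set Mat3} (h : ∀ M N, N ∈ opt M → N ∈ matMoves M) :
    WellFounded fun N M => N ∈ opt M :=
  Subrelation.wf (fun {N M} hNM => mtot_lt (h M N hNM)) (InvImage.wf mtot Nat.lt_wfRel.wf)

/-- The gamegraph of the matrix game `DNT(M)` with starting position `M`. -/
def DNTmat (M : Mat3) : GameGraph :=
  ⟨Mat3, DNTmatOpt, matWF (fun _ _ h => h.1), M⟩

/-- The gamegraph of the matrix game `TER(M)` with starting position `M`. -/
def TERmat (M : Mat3) : GameGraph :=
  ⟨Mat3, TERmatOpt, matWF (fun _ _ h => h.2), M⟩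

/-- The nim-value of the matrix game `DNT(M)`. -/
noncomputable def nimDNTmat (M : Mat3) : ℕ := (DNTmat M).nimValue

/-- The nim-value of the matrix game `TER(M)`. -/
noncomputable def nimTERmat (M : Mat3) : ℕ := (TERmat M).nimValue

namespace TERaux

noncomputable def tnim : Mat3 → ℕ := (TERmat (fun _ _ => 0)).nim

lemma tnim_eq (p : Mat3) :
    tnim p = mex {n : ℕ | ∃ q, ∃ _h : q ∈ TERmatOpt p, tnim q = n} := by
  unfold tnim GameGraph.nim
  exact WellFounded.fix_eq _ _ p

lemma mex_eq_zero {S : Set ℕ} (h : 0 ∉ S) : mex S = 0 :=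
  Nat.sInf_eq_zero.2 (Or.inl h)

lemma mex_ne_zero {S : Set ℕ} (h0 : 0 ∈ S) (hne : ∃ n, n ∉ S) : mex S ≠ 0 := by
  have hmem : mex S ∈ {n | n ∉ S} := Nat.sInf_mem hne
  intro h
  rw [h] at hmem
  exact hmem h0

lemma tnim_le (p : Mat3) : tnim p ≤ mtot p := by
  have key : ∀ n (q : Mat3), mtot q = n → tnim q ≤ mtot q := by
    intro n
    induction n using Nat.strong_induction_on with
    | _ n ih =>
      intro q hq
      rw [tnim_eq]
      apply Nat.sInf_le
      rintro ⟨s, hs, hsn⟩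
      have h1 := mtot_lt hs.2
      have h2 := ih (mtot s) (by omega) s rfl
      omega
  exact key (mtot p) p rfl

lemma terminal_nim {r : Mat3} (h : ¬ edgeOK r) : tnim r = 0 := by
  rw [tnim_eq]
  apply mex_eq_zero
  rintro ⟨s, hs, -⟩
  exact h hs.1

lemma step {q r : Mat3} (hr : r ∈ TERmatOpt q) (h0 : tnim r = 0) : tnim q ≠ 0 := by
  rw [tnim_eq]
  refine mex_ne_zero ⟨r, hr, h0⟩ ⟨mtot q, ?_⟩
  rintro ⟨s, hs, hsn⟩
  have h1 := tnim_le s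
  have h2 := mtot_lt hs.2
  omega

lemma notOK_top {r : Mat3} (h : r 0 0 + r 0 1 + r 0 2 = 0) : ¬ edgeOK r :=
  fun hE => by unfold edgeOK at hE; omega

lemma notOK_bot {r : Mat3} (h : r 2 0 + r 2 1 + r 2 2 = 0) : ¬ edgeOK r :=
  fun hE => by unfold edgeOK at hE; omega

lemma notOK_left {r : Mat3} (h : r 0 0 + r 1 0 + r 2 0 = 0) : ¬ edgeOK r :=
  fun hE => by unfold edgeOK at hE; omega

lemma notOK_right {r : Mat3} (h : r 0 2 + r 1 2 + r 2 2 = 0) : ¬ edgeOK r :=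
  fun hE => by unfold edgeOK at hE; omega

lemma mem_opt {q : Mat3} (hok : edgeOK q) (i j : Fin 3) (h : 0 < q i j) :
    decEntry q i j ∈ TERmatOpt q :=
  ⟨hok, i, j, h, rfl⟩

lemma kill_top {q : Mat3} (hok : edgeOK q) (h : q 0 0 + q 0 1 + q 0 2 = 1) :
    ∃ r, r ∈ TERmatOpt q ∧ tnim r = 0 := by
  have h3 : 0 < q 0 0 ∨ 0 < q 0 1 ∨ 0 < q 0 2 := by omega
  rcases h3 with h3 | h3 | h3
  · exact ⟨decEntry q 0 0, mem_opt hok 0 0 h3,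
      terminal_nim (notOK_top (by simp [decEntry]; omega))⟩
  · exact ⟨decEntry q 0 1, mem_opt hok 0 1 h3,
      terminal_nim (notOK_top (by simp [decEntry]; omega))⟩
  · exact ⟨decEntry q 0 2, mem_opt hok 0 2 h3,
      terminal_nim (notOK_top (by simp [decEntry]; omega))⟩

lemma kill_bot {q : Mat3} (hok : edgeOK q) (h : q 2 0 + q 2 1 + q 2 2 = 1) :
    ∃ r, r ∈ TERmatOpt q ∧ tnim r = 0 := by
  have h3 : 0 < q 2 0 ∨ 0 < q 2 1 ∨ 0 < q 2 2 := by omega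
  rcases h3 with h3 | h3 | h3
  · exact ⟨decEntry q 2 0, mem_opt hok 2 0 h3,
      terminal_nim (notOK_bot (by simp [decEntry]; omega))⟩
  · exact ⟨decEntry q 2 1, mem_opt hok 2 1 h3,
      terminal_nim (notOK_bot (by simp [decEntry]; omega))⟩
  · exact ⟨decEntry q 2 2, mem_opt hok 2 2 h3,
      terminal_nim (notOK_bot (by simp [decEntry]; omega))⟩

lemma kill_left {q : Mat3} (hok : edgeOK q) (h : q 0 0 + q 1 0 + q 2 0 = 1) :
    ∃ r, r ∈ TERmatOpt q ∧ tnim r = 0 := by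
  have h3 : 0 < q 0 0 ∨ 0 < q 1 0 ∨ 0 < q 2 0 := by omega
  rcases h3 with h3 | h3 | h3
  · exact ⟨decEntry q 0 0, mem_opt hok 0 0 h3,
      terminal_nim (notOK_left (by simp [decEntry]; omega))⟩
  · exact ⟨decEntry q 1 0, mem_opt hok 1 0 h3,
      terminal_nim (notOK_left (by simp [decEntry]; omega))⟩
  · exact ⟨decEntry q 2 0, mem_opt hok 2 0 h3,
      terminal_nim (notOK_left (by simp [decEntry]; omega))⟩

lemma kill_right {q : Mat3} (hok : edgeOK q) (h : q 0 2 + q 1 2 + q 2 2 = 1) :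
    ∃ r, r ∈ TERmatOpt q ∧ tnim r = 0 := by
  have h3 : 0 < q 0 2 ∨ 0 < q 1 2 ∨ 0 < q 2 2 := by omega
  rcases h3 with h3 | h3 | h3
  · exact ⟨decEntry q 0 2, mem_opt hok 0 2 h3,
      terminal_nim (notOK_right (by simp [decEntry]; omega))⟩
  · exact ⟨decEntry q 1 2, mem_opt hok 1 2 h3,
      terminal_nim (notOK_right (by simp [decEntry]; omega))⟩
  · exact ⟨decEntry q 2 2, mem_opt hok 2 2 h3,
      terminal_nim (notOK_right (by simp [decEntry]; omega))⟩

/-- Centrally symmetric matrices with zero center and all edge sums at least 2. -/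
def Psym (M : Mat3) : Prop :=
  M 0 0 = M 2 2 ∧ M 0 1 = M 2 1 ∧ M 0 2 = M 2 0 ∧ M 1 0 = M 1 2 ∧ M 1 1 = 0 ∧
  2 ≤ M 0 0 + M 0 1 + M 0 2 ∧ 2 ≤ M 0 0 + M 1 0 + M 2 0

lemma mem_moves {q : Mat3} (i j : Fin 3) (h : 0 < q i j) :
    decEntry q i j ∈ matMoves q :=
  ⟨i, j, h, rfl⟩

lemma main : ∀ n (M : Mat3), mtot M = n → Psym M → tnim M = 0 := by
  intro n
  induction n using Nat.strong_induction_on with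
  | _ n ih =>
    intro M hn hP
    obtain ⟨s1, s2, s3, s4, s5, e1, e2⟩ := hP
    rw [tnim_eq]
    apply mex_eq_zero
    rintro ⟨q, ⟨-, i, j, hpos, rfl⟩, hq0⟩
    fin_cases i <;> fin_cases j <;>
      simp only [Fin.zero_eta, Fin.mk_one, Fin.reduceFinMk] at hpos hq0
    · -- (0,0)
      have hokq : edgeOK (decEntry M 0 0) := by
        unfold edgeOK; simp [decEntry]; omega
      by_cases h1 : M 0 0 + M 0 1 + M 0 2 = 2
      · obtain ⟨r, hr, hr0⟩ := kill_top hokq (by simp [decEntry]; omega)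
        exact step hr hr0 hq0
      by_cases h2 : M 0 0 + M 1 0 + M 2 0 = 2
      · obtain ⟨r, hr, hr0⟩ := kill_left hokq (by simp [decEntry]; omega)
        exact step hr hr0 hq0
      · have hm : 0 < decEntry M 0 0 2 2 := by simp [decEntry]; omega
        have l1 : mtot (decEntry M 0 0) < n := hn ▸ mtot_lt (mem_moves 0 0 hpos)
        have l2 := mtot_lt (mem_moves (q := decEntry M 0 0) 2 2 hm)
        have hr0 : tnim (decEntry (decEntry M 0 0) 2 2) = 0 := by
          apply ih _ (by omega) _ rfl
          refine ⟨?_, ?_, ?_, ?_, ?_, ?_, ?_⟩ <;> simp [decEntry] <;> omega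
        exact step (mem_opt hokq 2 2 hm) hr0 hq0
    · -- (0,1)
      have hokq : edgeOK (decEntry M 0 1) := by
        unfold edgeOK; simp [decEntry]; omega
      by_cases h1 : M 0 0 + M 0 1 + M 0 2 = 2
      · obtain ⟨r, hr, hr0⟩ := kill_top hokq (by simp [decEntry]; omega)
        exact step hr hr0 hq0
      · have hm : 0 < decEntry M 0 1 2 1 := by simp [decEntry]; omega
        have l1 : mtot (decEntry M 0 1) < n := hn ▸ mtot_lt (mem_moves 0 1 hpos)
        have l2 := mtot_lt (mem_moves (q := decEntry M 0 1) 2 1 hm)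
        have hr0 : tnim (decEntry (decEntry M 0 1) 2 1) = 0 := by
          apply ih _ (by omega) _ rfl
          refine ⟨?_, ?_, ?_, ?_, ?_, ?_, ?_⟩ <;> simp [decEntry] <;> omega
        exact step (mem_opt hokq 2 1 hm) hr0 hq0
    · -- (0,2)
      have hokq : edgeOK (decEntry M 0 2) := by
        unfold edgeOK; simp [decEntry]; omega
      by_cases h1 : M 0 0 + M 0 1 + M 0 2 = 2
      · obtain ⟨r, hr, hr0⟩ := kill_top hokq (by simp [decEntry]; omega)
        exact step hr hr0 hq0
      by_cases h2 : M 0 2 + M 1 2 + M 2 2 = 2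
      · obtain ⟨r, hr, hr0⟩ := kill_right hokq (by simp [decEntry]; omega)
        exact step hr hr0 hq0
      · have hm : 0 < decEntry M 0 2 2 0 := by simp [decEntry]; omega
        have l1 : mtot (decEntry M 0 2) < n := hn ▸ mtot_lt (mem_moves 0 2 hpos)
        have l2 := mtot_lt (mem_moves (q := decEntry M 0 2) 2 0 hm)
        have hr0 : tnim (decEntry (decEntry M 0 2) 2 0) = 0 := by
          apply ih _ (by omega) _ rfl
          refine ⟨?_, ?_, ?_, ?_, ?_, ?_, ?_⟩ <;> simp [decEntry] <;> omega
        exact step (mem_opt hokq 2 0 hm) hr0 hq0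
    · -- (1,0)
      have hokq : edgeOK (decEntry M 1 0) := by
        unfold edgeOK; simp [decEntry]; omega
      by_cases h1 : M 0 0 + M 1 0 + M 2 0 = 2
      · obtain ⟨r, hr, hr0⟩ := kill_left hokq (by simp [decEntry]; omega)
        exact step hr hr0 hq0
      · have hm : 0 < decEntry M 1 0 1 2 := by simp [decEntry]; omega
        have l1 : mtot (decEntry M 1 0) < n := hn ▸ mtot_lt (mem_moves 1 0 hpos)
        have l2 := mtot_lt (mem_moves (q := decEntry M 1 0) 1 2 hm)
        have hr0 : tnim (decEntry (decEntry M 1 0) 1 2) = 0 := by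
          apply ih _ (by omega) _ rfl
          refine ⟨?_, ?_, ?_, ?_, ?_, ?_, ?_⟩ <;> simp [decEntry] <;> omega
        exact step (mem_opt hokq 1 2 hm) hr0 hq0
    · -- center
      omega
    · -- (1,2)
      have hokq : edgeOK (decEntry M 1 2) := by
        unfold edgeOK; simp [decEntry]; omega
      by_cases h1 : M 0 2 + M 1 2 + M 2 2 = 2
      · obtain ⟨r, hr, hr0⟩ := kill_right hokq (by simp [decEntry]; omega)
        exact step hr hr0 hq0
      · have hm : 0 < decEntry M 1 2 1 0 := by simp [decEntry]; omega
        have l1 : mtot (decEntry M 1 2) < n := hn ▸ mtot_lt (mem_moves 1 2 hpos)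
        have l2 := mtot_lt (mem_moves (q := decEntry M 1 2) 1 0 hm)
        have hr0 : tnim (decEntry (decEntry M 1 2) 1 0) = 0 := by
          apply ih _ (by omega) _ rfl
          refine ⟨?_, ?_, ?_, ?_, ?_, ?_, ?_⟩ <;> simp [decEntry] <;> omega
        exact step (mem_opt hokq 1 0 hm) hr0 hq0
    · -- (2,0)
      have hokq : edgeOK (decEntry M 2 0) := by
        unfold edgeOK; simp [decEntry]; omega
      by_cases h1 : M 2 0 + M 2 1 + M 2 2 = 2
      · obtain ⟨r, hr, hr0⟩ := kill_bot hokq (by simp [decEntry]; omega)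
        exact step hr hr0 hq0
      by_cases h2 : M 0 0 + M 1 0 + M 2 0 = 2
      · obtain ⟨r, hr, hr0⟩ := kill_left hokq (by simp [decEntry]; omega)
        exact step hr hr0 hq0
      · have hm : 0 < decEntry M 2 0 0 2 := by simp [decEntry]; omega
        have l1 : mtot (decEntry M 2 0) < n := hn ▸ mtot_lt (mem_moves 2 0 hpos)
        have l2 := mtot_lt (mem_moves (q := decEntry M 2 0) 0 2 hm)
        have hr0 : tnim (decEntry (decEntry M 2 0) 0 2) = 0 := by
          apply ih _ (by omega) _ rfl
          refine ⟨?_, ?_, ?_, ?_, ?_, ?_, ?_⟩ <;> simp [decEntry] <;> omega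
        exact step (mem_opt hokq 0 2 hm) hr0 hq0
    · -- (2,1)
      have hokq : edgeOK (decEntry M 2 1) := by
        unfold edgeOK; simp [decEntry]; omega
      by_cases h1 : M 2 0 + M 2 1 + M 2 2 = 2
      · obtain ⟨r, hr, hr0⟩ := kill_bot hokq (by simp [decEntry]; omega)
        exact step hr hr0 hq0
      · have hm : 0 < decEntry M 2 1 0 1 := by simp [decEntry]; omega
        have l1 : mtot (decEntry M 2 1) < n := hn ▸ mtot_lt (mem_moves 2 1 hpos)
        have l2 := mtot_lt (mem_moves (q := decEntry M 2 1) 0 1 hm)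
        have hr0 : tnim (decEntry (decEntry M 2 1) 0 1) = 0 := by
          apply ih _ (by omega) _ rfl
          refine ⟨?_, ?_, ?_, ?_, ?_, ?_, ?_⟩ <;> simp [decEntry] <;> omega
        exact step (mem_opt hokq 0 1 hm) hr0 hq0
    · -- (2,2)
      have hokq : edgeOK (decEntry M 2 2) := by
        unfold edgeOK; simp [decEntry]; omega
      by_cases h1 : M 2 0 + M 2 1 + M 2 2 = 2
      · obtain ⟨r, hr, hr0⟩ := kill_bot hokq (by simp [decEntry]; omega)
        exact step hr hr0 hq0
      by_cases h2 : M 0 2 + M 1 2 + M 2 2 = 2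
      · obtain ⟨r, hr, hr0⟩ := kill_right hokq (by simp [decEntry]; omega)
        exact step hr hr0 hq0
      · have hm : 0 < decEntry M 2 2 0 0 := by simp [decEntry]; omega
        have l1 : mtot (decEntry M 2 2) < n := hn ▸ mtot_lt (mem_moves 2 2 hpos)
        have l2 := mtot_lt (mem_moves (q := decEntry M 2 2) 0 0 hm)
        have hr0 : tnim (decEntry (decEntry M 2 2) 0 0) = 0 := by
          apply ih _ (by omega) _ rfl
          refine ⟨?_, ?_, ?_, ?_, ?_, ?_, ?_⟩ <;> simp [decEntry] <;> omega
        exact step (mem_opt hokq 0 0 hm) hr0 hq0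

end TERaux

/-- `nim(TER([[1,b,1],[d,0,d],[1,b,1]])) = 0` for all nonnegative integers `b`, `d`. -/
theorem TER_even_matrix (b d : ℕ) :
    nimTERmat ![![1, b, 1], ![d, 0, d], ![1, b, 1]] = 0 := by
  have h : TERaux.Psym ![![1, b, 1], ![d, 0, d], ![1, b, 1]] := by
    refine ⟨?_, ?_, ?_, ?_, ?_, ?_, ?_⟩ <;>
      simp [Matrix.cons_val_zero, Matrix.cons_val_one, Matrix.head_cons]
  exact TERaux.main _ _ rfl h
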